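/- Boethius' thesis (α → β) → ∼(α → ∼β) is provable in the sequent calculus sC, i.e., the sequent ⇒ (α → β) → ∼(α → ∼β) is derivable for all formulas α, β. -/
import Mathlib


inductive Fm : Type
  | var : ℕ → Fm
  | conj : Fm → Fm → Fm
  | disj : Fm → Fm → Fm
  | impl : Fm → Fm → Fm
  | neg : Fm → Fm
  deriving DecidableEq

open Fm

/-- Optional rules: cut, (ex-middle), (Peirce), (g-ex-middle), (at-ex-middle). -/
structure Rules where
  cut : Bool := false
  exMid : Bool := false
  peirce : Bool := false
  gem : Bool := false
  atEx : Bool := false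

/-- The sequent calculus sC for Wansing's connexive logic C, with optional extra rules. -/
inductive SC (R : Rules) : Finset Fm → Fm → Prop
  | init1 (p : ℕ) (Γ : Finset Fm) : SC R (insert (var p) Γ) (var p)
  | init2 (p : ℕ) (Γ : Finset Fm) : SC R (insert (neg (var p)) Γ) (neg (var p))
  | cut {Γ Δ : Finset Fm} {a c : Fm} : R.cut = true →
      SC R Γ a → SC R (insert a Δ) c → SC R (Γ ∪ Δ) c
  | implL {Γ Δ : Finset Fm} {a b c : Fm} :
      SC R Γ a → SC R (insert b Δ) c → SC R (insert (impl a b) (Γ ∪ Δ)) c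
  | implR {Γ : Finset Fm} {a b : Fm} :
      SC R (insert a Γ) b → SC R Γ (impl a b)
  | conjL {Γ : Finset Fm} {a b c : Fm} :
      SC R (insert a (insert b Γ)) c → SC R (insert (conj a b) Γ) c
  | conjR {Γ : Finset Fm} {a b : Fm} :
      SC R Γ a → SC R Γ b → SC R Γ (conj a b)
  | disjL {Γ : Finset Fm} {a b c : Fm} :
      SC R (insert a Γ) c → SC R (insert b Γ) c → SC R (insert (disj a b) Γ) c
  | disjR1 {Γ : Finset Fm} {a b : Fm} : SC R Γ a → SC R Γ (disj a b)
  | disjR2 {Γ : Finset Fm} {a b : Fm} : SC R Γ b → SC R Γ (disj a b)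
  | negnegL {Γ : Finset Fm} {a c : Fm} :
      SC R (insert a Γ) c → SC R (insert (neg (neg a)) Γ) c
  | negnegR {Γ : Finset Fm} {a : Fm} : SC R Γ a → SC R Γ (neg (neg a))
  | negimplL {Γ Δ : Finset Fm} {a b c : Fm} :
      SC R Γ a → SC R (insert (neg b) Δ) c → SC R (insert (neg (impl a b)) (Γ ∪ Δ)) c
  | negimplR {Γ : Finset Fm} {a b : Fm} :
      SC R (insert a Γ) (neg b) → SC R Γ (neg (impl a b))
  | negconjL {Γ : Finset Fm} {a b c : Fm} :
      SC R (insert (neg a) Γ) c → SC R (insert (neg b) Γ) c →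
      SC R (insert (neg (conj a b)) Γ) c
  | negconjR1 {Γ : Finset Fm} {a b : Fm} : SC R Γ (neg a) → SC R Γ (neg (conj a b))
  | negconjR2 {Γ : Finset Fm} {a b : Fm} : SC R Γ (neg b) → SC R Γ (neg (conj a b))
  | negdisjL {Γ : Finset Fm} {a b c : Fm} :
      SC R (insert (neg a) (insert (neg b) Γ)) c → SC R (insert (neg (disj a b)) Γ) c
  | negdisjR {Γ : Finset Fm} {a b : Fm} :
      SC R Γ (neg a) → SC R Γ (neg b) → SC R Γ (neg (disj a b))
  | exMid {Γ : Finset Fm} {a c : Fm} : R.exMid = true →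
      SC R (insert (neg a) Γ) c → SC R (insert a Γ) c → SC R Γ c
  | peirce {Γ : Finset Fm} {a b : Fm} : R.peirce = true →
      SC R (insert (impl a b) Γ) a → SC R Γ a
  | gem {Γ : Finset Fm} {a b c : Fm} : R.gem = true →
      SC R (insert (impl a b) Γ) c → SC R (insert a Γ) c → SC R Γ c
  | atEx {Γ : Finset Fm} {p : ℕ} {c : Fm} : R.atEx = true →
      SC R (insert (neg (var p)) Γ) c → SC R (insert (var p) Γ) c → SC R Γ c

/-- sC (with cut). -/
def sC : Rules := { cut := true }
/-- cut-free sC. -/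
def sCcf : Rules := {}
/-- sC3 = sC + (ex-middle). -/
def sC3 : Rules := { cut := true, exMid := true }
/-- sMC = sC + (Peirce). -/
def sMC : Rules := { cut := true, peirce := true }
/-- sMC* = sC + (g-ex-middle). -/
def sMCstar : Rules := { cut := true, gem := true }

theorem idAll {R : Rules} (a : Fm) : ∀ Γ : Finset Fm,
    SC R (insert a Γ) a ∧ SC R (insert (neg a) Γ) (neg a) := by
  induction a with
  | var p => exact fun Γ => ⟨SC.init1 p Γ, SC.init2 p Γ⟩
  | conj a b iha ihb =>
    intro Γ
    constructor
    · apply SC.conjL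
      exact SC.conjR (iha (insert b Γ)).1
        (by rw [Finset.insert_comm]; exact (ihb (insert a Γ)).1)
    · exact SC.negconjL (SC.negconjR1 (iha Γ).2) (SC.negconjR2 (ihb Γ).2)
  | disj a b iha ihb =>
    intro Γ
    constructor
    · exact SC.disjL (SC.disjR1 (iha Γ).1) (SC.disjR2 (ihb Γ).1)
    · apply SC.negdisjL
      exact SC.negdisjR (iha (insert (neg b) Γ)).2
        (by rw [Finset.insert_comm]; exact (ihb (insert (neg a) Γ)).2)
  | impl a b iha ihb =>
    intro Γ
    constructor
    · apply SC.implR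
      rw [Finset.insert_comm]
      have h := SC.implL (iha Γ).1 (ihb (insert a Γ)).1
      simpa using h
    · apply SC.negimplR
      rw [Finset.insert_comm]
      have h := SC.negimplL (iha Γ).1 (ihb (insert a Γ)).2
      simpa using h
  | neg a iha =>
    intro Γ
    exact ⟨(iha Γ).2, SC.negnegL (SC.negnegR (iha Γ).1)⟩

/-- Boethius' thesis (α → β) → ∼(α → ∼β) is provable in sC. -/
theorem stmt2 (α β : Fm) : SC sC ∅ (impl (impl α β) (neg (impl α (neg β)))) := by
  apply SC.implR
  apply SC.negimplR
  apply SC.negnegR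
  rw [Finset.insert_comm]
  have h := SC.implL (R := sC) (idAll α ∅).1 (idAll β (insert α ∅)).1
  simpa using h
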